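/- Let p(X) = ∏_{i=1}^m (X - λᵢ) be a monic polynomial of degree m with integer coefficients such that |λᵢ| = 1 for all i. Then every root λᵢ of p is a root of unity. -/

import Mathlib

/-- **Kronecker's theorem.** If a monic integer polynomial has all of its complex
roots on the unit circle, then every root is a root of unity. -/
theorem stmt1 (p : Polynomial ℤ) (hp : p.Monic)
    (habs : ∀ z : ℂ, (p.map (Int.castRingHom ℂ)).IsRoot z → ‖z‖ = 1) :
    ∀ z : ℂ, (p.map (Int.castRingHom ℂ)).IsRoot z → ∃ n : ℕ, 0 < n ∧ z ^ n = 1 := by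
  intro z hz
  have haev : Polynomial.aeval z p = 0 := by
    rw [Polynomial.aeval_def, ← Polynomial.eval_map]
    exact hz
  have hzint : IsIntegral ℤ z := ⟨p, hp, haev⟩
  have hzalg : IsIntegral ℚ z := hzint.tower_top
  let K := IntermediateField.adjoin ℚ ({z} : Set ℂ)
  haveI : FiniteDimensional ℚ K :=
    IntermediateField.adjoin.finiteDimensional hzalg
  haveI : NumberField K := ⟨⟩
  let x : K := ⟨z, IntermediateField.subset_adjoin ℚ _ rfl⟩
  have hxz : (algebraMap K ℂ) x = z := rfl
  have hx0 : Polynomial.aeval x p = 0 := by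
    apply (algebraMap K ℂ).injective
    rw [map_zero, ← Polynomial.aeval_algebraMap_apply, hxz]
    exact haev
  have hxint : IsIntegral ℤ x := ⟨p, hp, hx0⟩
  have hnorm : ∀ φ : K →+* ℂ, ‖φ x‖ = 1 := by
    intro φ
    have h1 : φ (Polynomial.aeval x p) = Polynomial.aeval (φ x) p := by
      rw [Polynomial.aeval_def, Polynomial.aeval_def, Polynomial.hom_eval₂]
      congr 1
      ext n
      simp
    have hroot : Polynomial.aeval (φ x) p = 0 := by rw [← h1, hx0, map_zero]
    have : (p.map (Int.castRingHom ℂ)).IsRoot (φ x) := by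
      rw [Polynomial.IsRoot, Polynomial.eval_map]
      simpa [Polynomial.aeval_def] using hroot
    simpa using habs _ this
  obtain ⟨n, hn, hpow⟩ :=
    NumberField.Embeddings.pow_eq_one_of_norm_eq_one K ℂ hxint hnorm
  refine ⟨n, hn, ?_⟩
  have := congrArg (algebraMap K ℂ) hpow
  simpa [hxz] using this
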